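/- For measurable R : [0,t_f] → [0,∞) with ∫₀^{t_f} R dt = c and measurable s : [0,t_f] → [s_min, s_max] with 0 < s_min ≤ s_max, the total communication energy ∫₀^{t_f} ((2^{R(t)} − 1)/K) s(t) dt is at least (s_min/K) · t_f · (2^{c/t_f} − 1). -/

import Mathlib

open MeasureTheory

/-- Lower bound on total communication energy: for `R ≥ 0` with `∫₀^{t_f} R = c` and
channel quality `s(t) ∈ [s_min, s_max]`, `∫₀^{t_f} ((2^{R(t)} − 1)/K)s(t) dt ≥
(s_min/K)·t_f·(2^{c/t_f} − 1)`. -/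
theorem communication_energy_lower_bound (t_f K c s_min s_max : ℝ)
    (ht : 0 < t_f) (hK : 0 < K) (hc : 0 ≤ c) (hsmin : 0 < s_min) (hss : s_min ≤ s_max)
    (R s : ℝ → ℝ) (hRmeas : Measurable R) (hsmeas : Measurable s)
    (hRpos : ∀ t ∈ Set.Icc 0 t_f, 0 ≤ R t)
    (hsb : ∀ t ∈ Set.Icc 0 t_f, s t ∈ Set.Icc s_min s_max)
    (hRint : IntervalIntegrable R volume 0 t_f)
    (hIc : (∫ t in (0:ℝ)..t_f, R t) = c)
    (hEint : IntervalIntegrable (fun t => ((2 : ℝ) ^ (R t) - 1) / K * s t) volume 0 t_f) :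
    s_min / K * t_f * ((2 : ℝ) ^ (c / t_f) - 1)
      ≤ ∫ t in (0:ℝ)..t_f, ((2 : ℝ) ^ (R t) - 1) / K * s t := by
  set m : ℝ := c / t_f with hm
  have hmt : m * t_f = c := by rw [hm]; field_simp [ht.ne']
  have hlog2 : (0:ℝ) < Real.log 2 := Real.log_pos (by norm_num)
  have h2m : (0:ℝ) < (2:ℝ) ^ m := Real.rpow_pos_of_pos (by norm_num) m
  -- tangent line inequality for rpow
  have tangent : ∀ x : ℝ, (2:ℝ)^m + (2:ℝ)^m * Real.log 2 * (x - m) ≤ (2:ℝ)^x := by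
    intro x
    have hx : (2:ℝ)^x = Real.exp (Real.log 2 * x) := by
      rw [Real.rpow_def_of_pos (by norm_num)]
    have hxm : (2:ℝ)^m = Real.exp (Real.log 2 * m) := by
      rw [Real.rpow_def_of_pos (by norm_num)]
    rw [hx, hxm]
    have h1 : Real.log 2 * x - Real.log 2 * m + 1
        ≤ Real.exp (Real.log 2 * x - Real.log 2 * m) :=
      Real.add_one_le_exp _
    have h2 : Real.exp (Real.log 2 * m) * (Real.log 2 * x - Real.log 2 * m + 1)
        ≤ Real.exp (Real.log 2 * m) * Real.exp (Real.log 2 * x - Real.log 2 * m) :=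
      mul_le_mul_of_nonneg_left h1 (Real.exp_pos _).le
    rw [← Real.exp_add] at h2
    have : Real.log 2 * m + (Real.log 2 * x - Real.log 2 * m) = Real.log 2 * x := by ring
    rw [this] at h2
    nlinarith [Real.exp_pos (Real.log 2 * m)]
  set A : ℝ := s_min / K * ((2:ℝ)^m - 1 - (2:ℝ)^m * Real.log 2 * m) with hA
  set B : ℝ := s_min / K * ((2:ℝ)^m * Real.log 2) with hB
  have hsK : (0:ℝ) < s_min / K := div_pos hsmin hK
  -- pointwise bound on [0, t_f]
  have hpt : ∀ t ∈ Set.Icc (0:ℝ) t_f,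
      A + B * R t ≤ ((2:ℝ) ^ (R t) - 1) / K * s t := by
    intro t htmem
    have h1 : (1:ℝ) ≤ (2:ℝ) ^ (R t) := by
      have := Real.one_le_rpow (by norm_num : (1:ℝ) ≤ 2) (hRpos t htmem)
      simpa using this
    have hs1 := (hsb t htmem).1
    have htan := tangent (R t)
    have step1 : A + B * R t ≤ s_min / K * ((2:ℝ) ^ (R t) - 1) := by
      have := mul_le_mul_of_nonneg_left (sub_le_sub_right htan 1) hsK.le
      rw [hA, hB]
      nlinarith [this]
    have step2 : s_min / K * ((2:ℝ) ^ (R t) - 1) ≤ ((2:ℝ) ^ (R t) - 1) / K * s t := by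
      have hfac : (0:ℝ) ≤ ((2:ℝ) ^ (R t) - 1) / K := div_nonneg (by linarith) hK.le
      have := mul_le_mul_of_nonneg_left hs1 hfac
      calc s_min / K * ((2:ℝ) ^ (R t) - 1)
          = ((2:ℝ) ^ (R t) - 1) / K * s_min := by ring
        _ ≤ ((2:ℝ) ^ (R t) - 1) / K * s t := this
    linarith
  have hfint : IntervalIntegrable (fun t => A + B * R t) volume 0 t_f :=
    (intervalIntegrable_const).add (hRint.const_mul B)
  have hmono : (∫ t in (0:ℝ)..t_f, (A + B * R t))
      ≤ ∫ t in (0:ℝ)..t_f, ((2:ℝ) ^ (R t) - 1) / K * s t :=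
    intervalIntegral.integral_mono_on ht.le hfint hEint hpt
  have hval : (∫ t in (0:ℝ)..t_f, (A + B * R t)) = A * t_f + B * c := by
    rw [intervalIntegral.integral_add intervalIntegrable_const (hRint.const_mul B),
      intervalIntegral.integral_const, intervalIntegral.integral_const_mul, hIc]
    simp [mul_comm]
  have heq : A * t_f + B * c = s_min / K * t_f * ((2:ℝ) ^ m - 1) := by
    rw [hA, hB, ← hmt]; ring
  rw [hval, heq] at hmono
  exact hmono
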